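/- arXiv:1711.05028 — 2 statements merged into one kernel-verified Lean document; each statement's English description precedes it below -/
import Mathlib

section
/- Let d, n be positive integers with nd even, and let ν be a symmetric matrix with (nd)ν(i,j) ∈ ℕ, Σ_{i,j} ν(i,j) = 1, and marginals ρ(i) = Σ_j ν(i,j). The number of perfect matchings of nd labelled points, partitioned into groups of sizes ndρ_1,...,ndρ_q, inducing exactly ndν(i,j) matched pairs between groups i and j for i ≠ j and (nd ν(i,i))/2 pairs within group i, equals ∏_{i=1}^q [ (ndρ_i)! / ∏_j (ndν_{ij})! ] · ∏_{i<j} (nd ν_{ij})! · ∏_i (nd ν_{ii} - 1)!!, where counts involving within-group pairs require ndν(i,i) even. -/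
open scoped Classical
open Finset

set_option maxHeartbeats 1000000

/-- Card of a filter over a subtype vs filter over the ambient type. -/
lemma cardSub {α : Type} [Fintype α] (p : α → Prop) (Q : α → Prop) :
    (Finset.univ.filter fun v : {x : α // p x} => Q v.1).card
      = (Finset.univ.filter fun x : α => p x ∧ Q x).card := by
  rw [← Fintype.card_subtype, ← Fintype.card_subtype]
  exact Fintype.card_congr (Equiv.subtypeSubtypeEquivSubtypeInter p Q)

/-- Number of fixed-point-free involutions on a finite type of even cardinality. -/
lemma matchCard (N : ℕ) : ∀ (α : Type) [Fintype α] [DecidableEq α], Fintype.card α = N →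
    Even N →
    (Finset.univ.filter fun f : Equiv.Perm α =>
        (∀ x, f (f x) = x) ∧ ∀ x, f x ≠ x).card = Nat.doubleFactorial (N - 1) := by
  induction N using Nat.strong_induction_on with
  | _ N IH =>
  intro α _ _ hcard hev
  rcases Nat.eq_zero_or_pos N with h0 | hpos
  · subst h0
    have : IsEmpty α := Fintype.card_eq_zero_iff.mp hcard
    have : (Finset.univ.filter fun f : Equiv.Perm α =>
        (∀ x, f (f x) = x) ∧ ∀ x, f x ≠ x) = Finset.univ := by
      apply Finset.filter_true_of_mem
      intro f _
      exact ⟨fun x => (this.false x).elim, fun x => (this.false x).elim⟩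
    rw [this, Finset.card_univ, Fintype.card_perm, hcard]
    rfl
  · -- N ≥ 2
    obtain ⟨M, hM⟩ : ∃ M, N = M + 2 := by
      rcases hev with ⟨k, hk⟩
      rcases Nat.eq_zero_or_pos k with h | h
      · omega
      · exact ⟨2 * k - 2, by omega⟩
    have hNe : Nonempty α := Fintype.card_pos_iff.mp (by omega)
    obtain ⟨a⟩ := hNe
    rw [Finset.card_eq_sum_card_fiberwise
      (f := fun f : Equiv.Perm α => f a) (t := Finset.univ.erase a)
      (by intro f hf
          simp only [Finset.mem_coe, Finset.mem_filter] at hf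
          exact Finset.mem_erase.mpr ⟨hf.2.2 a, Finset.mem_univ _⟩)]
    have hconst : ∀ b ∈ Finset.univ.erase a,
        ((Finset.univ.filter fun f : Equiv.Perm α =>
          (∀ x, f (f x) = x) ∧ ∀ x, f x ≠ x).filter fun f => f a = b).card
          = Nat.doubleFactorial (M - 1) := by
      intro b hb
      have hba : b ≠ a := (Finset.mem_erase.mp hb).1
      set p : α → Prop := fun x => x ≠ a ∧ x ≠ b with hp
      have hcardp : Fintype.card {x // p x} = M := by
        rw [Fintype.card_subtype]
        have : Finset.univ.filter p = (Finset.univ.erase a).erase b := by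
          ext x
          simp [hp, Finset.mem_erase, and_comm]
        rw [this, Finset.card_erase_of_mem (Finset.mem_erase.mpr ⟨hba, Finset.mem_univ _⟩),
          Finset.card_erase_of_mem (Finset.mem_univ _), Finset.card_univ, hcard]
        omega
      have hrec := IH M (by omega) {x // p x} hcardp (by
        rcases hev with ⟨k, hk⟩; exact ⟨k - 1, by omega⟩)
      rw [← hrec]
      have hpf : ∀ (f : Equiv.Perm α), ((∀ x, f (f x) = x) ∧ f a = b) →
          ∀ x, p x ↔ p (f x) := by
        intro f h x
        constructor
        · rintro ⟨hxa, hxb⟩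
          constructor
          · intro hfa
            exact hxb (by rw [← h.2, ← hfa, h.1])
          · intro hfb
            exact hxa (f.injective (by rw [hfb, h.2]))
        · rintro ⟨hfa, hfb⟩
          constructor
          · intro hxa
            exact hfb (by rw [hxa, h.2])
          · intro hxb
            apply hfa
            rw [hxb, ← h.2, h.1]
      apply Finset.card_nbij'
        (i := fun f => if h : (∀ x, f (f x) = x) ∧ f a = b then
          f.subtypePerm (fun x => (hpf f h x).symm) else 1)
        (j := fun g => Equiv.swap a b * g.extendDomain (Equiv.refl {x // p x}))
      · -- hi
        intro f hf
        simp only [Finset.mem_coe, Finset.mem_filter, Finset.mem_univ, true_and] at hf ⊢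
        obtain ⟨⟨hinv, hfpf⟩, hfa⟩ := hf
        rw [dif_pos ⟨hinv, hfa⟩]
        constructor
        · intro x
          apply Subtype.ext
          simp [Equiv.Perm.subtypePerm_apply, hinv]
        · intro x hx
          exact hfpf x.1 (congrArg Subtype.val hx)
      · -- hj
        intro g hg
        simp only [Finset.mem_coe, Finset.mem_filter, Finset.mem_univ, true_and] at hg ⊢
        obtain ⟨hginv, hgfpf⟩ := hg
        have hpa : ¬ p a := fun h => h.1 rfl
        have hpb : ¬ p b := fun h => h.2 rfl
        have key : ∀ x, (Equiv.swap a b * g.extendDomain (Equiv.refl {x // p x})) x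
            = if h : p x then (g ⟨x, h⟩).1 else if x = a then b else a := by
          intro x
          by_cases h : p x
          · rw [dif_pos h]
            have : g.extendDomain (Equiv.refl {x // p x}) x = (g ⟨x, h⟩).1 := by
              have := Equiv.Perm.extendDomain_apply_subtype g (Equiv.refl {x // p x}) h
              simpa using this
            simp only [Equiv.Perm.mul_apply, this]
            exact Equiv.swap_apply_of_ne_of_ne (g ⟨x, h⟩).2.1 (g ⟨x, h⟩).2.2
          · rw [dif_neg h]
            have hfix : g.extendDomain (Equiv.refl {x // p x}) x = x :=
              Equiv.Perm.extendDomain_apply_not_subtype g (Equiv.refl {x // p x}) h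
            simp only [Equiv.Perm.mul_apply, hfix]
            rcases not_and_or.mp h with hx | hx
            · push_neg at hx
              rw [hx, if_pos rfl, Equiv.swap_apply_left]
            · push_neg at hx
              rw [hx, Equiv.swap_apply_right, if_neg hba]
        refine ⟨⟨?_, ?_⟩, ?_⟩
        · intro x
          rw [key, key]
          by_cases h : p x
          · rw [dif_pos h, dif_pos (g ⟨x, h⟩).2]
            have := hginv ⟨x, h⟩
            rw [Subtype.ext_iff] at this
            simpa using this
          · rw [dif_neg h]
            rcases not_and_or.mp h with hx | hx
            · push_neg at hx
              subst hx
              rw [if_pos rfl, dif_neg hpb, if_neg hba]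
            · push_neg at hx
              subst hx
              rw [if_neg hba, dif_neg hpa, if_pos rfl]
        · intro x
          rw [key]
          by_cases h : p x
          · rw [dif_pos h]
            intro hx
            exact hgfpf ⟨x, h⟩ (Subtype.ext hx)
          · rw [dif_neg h]
            rcases not_and_or.mp h with hx | hx
            · push_neg at hx; subst hx; rw [if_pos rfl]; exact hba
            · push_neg at hx; subst hx; rw [if_neg hba]; exact Ne.symm hba
        · rw [key, dif_neg hpa, if_pos rfl]
      · -- left_inv
        intro f hf
        simp only [Finset.mem_coe, Finset.mem_filter, Finset.mem_univ, true_and] at hf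
        obtain ⟨⟨hinv, hfpf⟩, hfa⟩ := hf
        beta_reduce
        rw [dif_pos ⟨hinv, hfa⟩]
        ext x
        simp only [Equiv.Perm.mul_apply]
        by_cases h : p x
        · have : (f.subtypePerm (fun x => (hpf f ⟨hinv, hfa⟩ x).symm)).extendDomain (Equiv.refl {x // p x}) x
              = f x := by
            have := Equiv.Perm.extendDomain_apply_subtype
              (f.subtypePerm (fun x => (hpf f ⟨hinv, hfa⟩ x).symm)) (Equiv.refl {x // p x}) h
            simpa using this
          rw [this]
          apply Equiv.swap_apply_of_ne_of_ne
          · intro hxa; exact h.2 (by rw [← hfa, ← hxa, hinv])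
          · intro hxb; exact h.1 (f.injective (by rw [hxb, hfa]))
        · have hfix := Equiv.Perm.extendDomain_apply_not_subtype
            (f.subtypePerm (fun x => (hpf f ⟨hinv, hfa⟩ x).symm)) (Equiv.refl {x // p x}) h
          rw [hfix]
          rcases not_and_or.mp h with hx | hx
          · push_neg at hx; subst hx
            rw [Equiv.swap_apply_left, hfa]
          · push_neg at hx; subst hx
            rw [Equiv.swap_apply_right, ← hfa, hinv]
      · -- right_inv
        intro g hg
        simp only [Finset.mem_coe, Finset.mem_filter, Finset.mem_univ, true_and] at hg
        have hj1a : (Equiv.swap a b * g.extendDomain (Equiv.refl {x // p x})) a = b := by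
          have hfix := Equiv.Perm.extendDomain_apply_not_subtype g
            (Equiv.refl {x // p x}) (fun h : p a => h.1 rfl)
          simp only [Equiv.Perm.mul_apply, hfix, Equiv.swap_apply_left]
        have hj1b : ∀ y : {x // p x}, (Equiv.swap a b * g.extendDomain (Equiv.refl {x // p x})) y.1
            = (g y).1 := by
          intro y
          have : g.extendDomain (Equiv.refl {x // p x}) y.1 = (g y).1 := by
            have := Equiv.Perm.extendDomain_apply_subtype g (Equiv.refl {x // p x}) y.2
            simpa using this
          simp only [Equiv.Perm.mul_apply, this]
          exact Equiv.swap_apply_of_ne_of_ne (g y).2.1 (g y).2.2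
        have hinvj : (∀ x, (Equiv.swap a b * g.extendDomain (Equiv.refl {x // p x}))
            ((Equiv.swap a b * g.extendDomain (Equiv.refl {x // p x})) x) = x) ∧
            (Equiv.swap a b * g.extendDomain (Equiv.refl {x // p x})) a = b := by
          constructor
          · intro x
            by_cases h : p x
            · rw [hj1b ⟨x, h⟩, hj1b (g ⟨x, h⟩)]
              have := hg.1 ⟨x, h⟩
              rw [Subtype.ext_iff] at this
              simpa using this
            · have hJb : (Equiv.swap a b * g.extendDomain (Equiv.refl {x // p x})) b = a := by
                have hfix := Equiv.Perm.extendDomain_apply_not_subtype g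
                  (Equiv.refl {x // p x}) (fun h : p b => h.2 rfl)
                simp only [Equiv.Perm.mul_apply, hfix, Equiv.swap_apply_right]
              rcases not_and_or.mp h with hx | hx
              · push_neg at hx; rw [hx, hj1a, hJb]
              · push_neg at hx; rw [hx, hJb, hj1a]
          · exact hj1a
        beta_reduce
        rw [dif_pos ⟨hinvj.1, hinvj.2⟩]
        ext y
        simp only [Equiv.Perm.subtypePerm_apply]
        exact hj1b y
    rw [Finset.sum_congr rfl hconst, Finset.sum_const, smul_eq_mul,
      Finset.card_erase_of_mem (Finset.mem_univ _), Finset.card_univ, hcard, hM]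
    show (M + 2 - 1) * Nat.doubleFactorial (M - 1) = Nat.doubleFactorial (M + 2 - 1)
    rw [show M + 2 - 1 = M + 1 from rfl, Nat.doubleFactorial_add_one]

lemma cardFilterEq {α : Type} [Fintype α] (p : α → Prop) [DecidablePred p] :
    (Finset.univ.filter p).card = Nat.card {x // p x} := by
  rw [Nat.card_eq_fintype_card, Fintype.card_subtype]

lemma cardSub2 {α : Type} (p : α → Prop) (Q : {x : α // p x} → Prop) (R : α → Prop)
    (h : ∀ x (hx : p x), Q ⟨x, hx⟩ ↔ R x) :
    Nat.card {v : {x : α // p x} // Q v} = Nat.card {x : α // p x ∧ R x} :=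
  Nat.card_congr
    ⟨fun v => ⟨v.1.1, v.1.2, (h v.1.1 v.1.2).1 v.2⟩,
     fun x => ⟨⟨x.1, x.2.1⟩, (h x.1 x.2.1).2 x.2.2⟩,
     fun v => by apply Subtype.ext; apply Subtype.ext; rfl,
     fun x => by apply Subtype.ext; rfl⟩

/-- Number of functions with prescribed fiber cardinalities, range restricted to `s`. -/
lemma countFiber {β : Type} [Fintype β] [DecidableEq β] :
    ∀ (s : Finset β) (α : Type) [Fintype α] [DecidableEq α] (k : β → ℕ),
    (∑ j ∈ s, k j = Fintype.card α) →
    (Finset.univ.filter fun c : α → β =>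
        (∀ x, c x ∈ s) ∧ ∀ j ∈ s, (Finset.univ.filter fun x => c x = j).card = k j).card
      = Nat.multinomial s k := by
  intro s
  induction s using Finset.induction_on with
  | empty =>
    intro α _ _ k hsum
    simp only [Finset.sum_empty] at hsum
    have hemp : IsEmpty α := Fintype.card_eq_zero_iff.mp hsum.symm
    have : (Finset.univ.filter fun c : α → β =>
        (∀ x, c x ∈ (∅ : Finset β)) ∧ ∀ j ∈ (∅ : Finset β),
          (Finset.univ.filter fun x => c x = j).card = k j) = Finset.univ := by
      apply Finset.filter_true_of_mem
      intro c _
      exact ⟨fun x => (hemp.false x).elim, fun j hj => absurd hj (Finset.notMem_empty j)⟩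
    rw [this, Finset.card_univ, Nat.multinomial_empty, Fintype.card_fun, hsum.symm, pow_zero]
  | @insert b t hb ih =>
    intro α _ _ k hsum
    rw [Finset.sum_insert hb] at hsum
    have hkb : k b ≤ Fintype.card α := by omega
    rw [Finset.card_eq_sum_card_fiberwise
      (f := fun c : α → β => Finset.univ.filter fun x => c x = b)
      (t := Finset.powersetCard (k b) Finset.univ)
      (by intro c hc
          simp only [Finset.mem_coe, Finset.mem_filter, Finset.mem_univ, true_and] at hc
          rw [Finset.mem_coe, Finset.mem_powersetCard]
          exact ⟨Finset.subset_univ _, hc.2 b (Finset.mem_insert_self b t)⟩)]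
    have hconst : ∀ A ∈ Finset.powersetCard (k b) Finset.univ,
        ((Finset.univ.filter fun c : α → β =>
          (∀ x, c x ∈ insert b t) ∧ ∀ j ∈ insert b t,
            (Finset.univ.filter fun x => c x = j).card = k j).filter
          fun c => Finset.univ.filter (fun x => c x = b) = A).card
        = Nat.multinomial t k := by
      intro A hA
      rw [Finset.mem_powersetCard] at hA
      have hcardA : Fintype.card {x : α // x ∉ A} = ∑ j ∈ t, k j := by
        rw [Fintype.card_subtype]
        have : Finset.univ.filter (fun x : α => x ∉ A) = Finset.univ \ A := by
          ext x; simp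
        rw [this, Finset.card_sdiff_of_subset (Finset.subset_univ _), Finset.card_univ, hA.2]
        omega
      have := ih {x : α // x ∉ A} k hcardA.symm
      rw [← this]
      apply Finset.card_nbij'
        (i := fun c => fun v : {x : α // x ∉ A} => c v.1)
        (j := fun c' => fun x : α => if h : x ∉ A then c' ⟨x, h⟩ else b)
      · -- hi
        intro c hc
        simp only [Finset.mem_coe, Finset.mem_filter, Finset.mem_univ, true_and] at hc ⊢
        obtain ⟨⟨hrange, hcount⟩, hfib⟩ := hc
        constructor
        · intro v
          have h1 : c v.1 ∈ insert b t := hrange v.1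
          rcases Finset.mem_insert.mp h1 with h | h
          · exfalso
            apply v.2
            have hm : (v : α) ∈ Finset.univ.filter (fun x => c x = b) := by
              simp [h]
            rw [hfib] at hm
            exact hm
          · exact h
        · intro j hj
          have hjb : j ≠ b := fun h => hb (h ▸ hj)
          have hc2 := hcount j (Finset.mem_insert_of_mem hj)
          rw [cardFilterEq] at hc2 ⊢
          rw [cardSub2 (fun x : α => x ∉ A) (fun v => c ↑v = j) (fun x => c x = j)
            (fun x hx => Iff.rfl), ← hc2]
          apply Nat.card_congr
          apply Equiv.subtypeEquivRight
          intro x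
          constructor
          · rintro ⟨_, h⟩; exact h
          · intro h
            refine ⟨?_, h⟩
            intro hxA
            rw [← hfib] at hxA
            simp only [Finset.mem_filter, Finset.mem_univ, true_and] at hxA
            exact hjb (h ▸ hxA)
      · -- hj
        intro c' hc'
        simp only [Finset.mem_coe, Finset.mem_filter, Finset.mem_univ, true_and] at hc' ⊢
        obtain ⟨hrange, hcount⟩ := hc'
        have hfib : Finset.univ.filter
            (fun x : α => (if h : x ∉ A then c' ⟨x, h⟩ else b) = b) = A := by
          ext x
          simp only [Finset.mem_filter, Finset.mem_univ, true_and]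
          by_cases h : x ∉ A
          · rw [dif_pos h]
            constructor
            · intro heq
              exact absurd (heq ▸ hrange ⟨x, h⟩) hb
            · intro hx; exact absurd hx h
          · rw [dif_neg h]
            push_neg at h
            exact ⟨fun _ => h, fun _ => rfl⟩
        refine ⟨⟨?_, ?_⟩, hfib⟩
        · intro x
          by_cases h : x ∉ A
          · rw [dif_pos h]
            exact Finset.mem_insert_of_mem (hrange ⟨x, h⟩)
          · rw [dif_neg h]
            exact Finset.mem_insert_self b t
        · intro j hj
          rcases Finset.mem_insert.mp hj with h | h
          · subst h
            rw [hfib, hA.2]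
          · have hjb : j ≠ b := fun he => hb (he ▸ h)
            have hc2 := hcount j h
            rw [cardFilterEq] at hc2 ⊢
            rw [← hc2,
              cardSub2 (fun x : α => x ∉ A) (fun v => c' v = j)
                (fun x => ∀ hx : x ∉ A, c' ⟨x, hx⟩ = j) (fun x hx => by
                  constructor
                  · intro he hx'; exact he
                  · intro hh; exact hh hx)]
            apply Nat.card_congr
            apply Equiv.subtypeEquivRight
            intro x
            by_cases hx : x ∉ A
            · rw [dif_pos hx]
              constructor
              · intro he
                refine ⟨hx, fun hx' => ?_⟩
                exact he
              · rintro ⟨_, hall⟩; exact hall hx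
            · rw [dif_neg hx]
              constructor
              · intro he; exact absurd he.symm hjb
              · rintro ⟨hxA, _⟩; exact absurd hxA hx
      · -- left_inv
        intro c hc
        simp only [Finset.mem_coe, Finset.mem_filter, Finset.mem_univ, true_and] at hc
        funext x
        beta_reduce
        by_cases h : x ∉ A
        · rw [dif_pos h]
        · rw [dif_neg h]
          push_neg at h
          rw [← hc.2] at h
          simp only [Finset.mem_filter, Finset.mem_univ, true_and] at h
          exact h.symm
      · -- right_inv
        intro c' _
        funext v
        show (if h : (v : α) ∉ A then c' ⟨(v : α), h⟩ else b) = c' v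
        rw [dif_pos v.2]
    rw [Finset.sum_congr rfl hconst, Finset.sum_const, smul_eq_mul,
      Finset.card_powersetCard, Finset.card_univ, Nat.multinomial_insert hb, ← hsum]

section Pairing

variable {q : ℕ} {V : Type} (t : V → Fin q × Fin q)

/-- Type of off-diagonal matching data. -/
abbrev TypeE := ∀ a : {a : Fin q × Fin q // a.1 < a.2},
  ({p : V // t p = (a : Fin q × Fin q)} ≃ {p : V // t p = (a : Fin q × Fin q).swap})

/-- Type of diagonal matching data. -/
abbrev TypeH := ∀ i : Fin q,
  {g : Equiv.Perm {p : V // t p = (i, i)} // (∀ x, g (g x) = x) ∧ ∀ x, g x ≠ x}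

lemma Eapp_cong (E : TypeE t) {a b : {a : Fin q × Fin q // a.1 < a.2}} (hab : a = b)
    (w : {p : V // t p = (a : Fin q × Fin q)}) (w' : {p : V // t p = (b : Fin q × Fin q)})
    (hw : (w : V) = w') : ((E a) w).1 = ((E b) w').1 := by
  subst hab
  cases Subtype.ext hw
  rfl

lemma Esymm_cong (E : TypeE t) {a b : {a : Fin q × Fin q // a.1 < a.2}} (hab : a = b)
    (w : {p : V // t p = (a : Fin q × Fin q).swap}) (w' : {p : V // t p = (b : Fin q × Fin q).swap})
    (hw : (w : V) = w') : ((E a).symm w).1 = ((E b).symm w').1 := by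
  subst hab
  cases Subtype.ext hw
  rfl

lemma Hcong (H : TypeH t) {i j : Fin q} (hij : i = j)
    (w : {p : V // t p = (i, i)}) (w' : {p : V // t p = (j, j)})
    (hw : (w : V) = w') : ((H i).1 w).1 = ((H j).1 w').1 := by
  subst hij
  cases Subtype.ext hw
  rfl

/-- The permutation glued from matching data. -/
def glue (E : TypeE t) (H : TypeH t) (p : V) : V :=
  if h : (t p).1 < (t p).2 then ((E ⟨t p, h⟩) ⟨p, rfl⟩).1
  else if h' : (t p).2 < (t p).1 then
    ((E ⟨(t p).swap, h'⟩).symm ⟨p, (Prod.swap_swap (t p)).symm⟩).1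
  else ((H (t p).1).1 ⟨p, Prod.ext_iff.mpr
    ⟨rfl, (le_antisymm (not_lt.mp h') (not_lt.mp h)).symm⟩⟩).1

lemma glue_t (E : TypeE t) (H : TypeH t) (p : V) : t (glue t E H p) = (t p).swap := by
  simp only [glue]
  split_ifs with h h'
  · exact ((E ⟨t p, h⟩) ⟨p, rfl⟩).2
  · exact ((E ⟨(t p).swap, h'⟩).symm ⟨p, (Prod.swap_swap (t p)).symm⟩).2
  · have h2 : (t p).1 = (t p).2 := le_antisymm (not_lt.mp h') (not_lt.mp h)
    refine (((H (t p).1).1 ⟨p, Prod.ext_iff.mpr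
      ⟨rfl, (le_antisymm (not_lt.mp h') (not_lt.mp h)).symm⟩⟩).2).trans ?_
    exact Prod.ext_iff.mpr ⟨h2, rfl⟩

lemma glue_invol (E : TypeE t) (H : TypeH t) (p : V) : glue t E H (glue t E H p) = p := by
  by_cases h : (t p).1 < (t p).2
  · have hgp : glue t E H p = ((E ⟨t p, h⟩) ⟨p, rfl⟩).1 := by
      simp only [glue]; rw [dif_pos h]
    set x : V := ((E ⟨t p, h⟩) ⟨p, rfl⟩).1 with hxdef
    have htx : t x = (t p).swap := ((E ⟨t p, h⟩) ⟨p, rfl⟩).2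
    have h1 : ¬ (t x).1 < (t x).2 := by
      rw [htx]
      exact not_lt.mpr (le_of_lt h)
    have h2 : (t x).2 < (t x).1 := by
      rw [htx]
      exact h
    rw [hgp]
    show glue t E H x = p
    simp only [glue]
    rw [dif_neg h1, dif_pos h2]
    have hidx : (⟨(t x).swap, h2⟩ : {a : Fin q × Fin q // a.1 < a.2}) = ⟨t p, h⟩ :=
      Subtype.ext (by show (t x).swap = t p; rw [htx, Prod.swap_swap])
    calc ((E ⟨(t x).swap, h2⟩).symm ⟨x, (Prod.swap_swap (t x)).symm⟩).1
        = ((E ⟨t p, h⟩).symm ((E ⟨t p, h⟩) ⟨p, rfl⟩)).1 := Esymm_cong t E hidx _ _ rfl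
      _ = p := by rw [Equiv.symm_apply_apply]
  · by_cases h' : (t p).2 < (t p).1
    · have hgp : glue t E H p
          = ((E ⟨(t p).swap, h'⟩).symm ⟨p, (Prod.swap_swap (t p)).symm⟩).1 := by
        simp only [glue]; rw [dif_neg h, dif_pos h']
      set x : V := ((E ⟨(t p).swap, h'⟩).symm ⟨p, (Prod.swap_swap (t p)).symm⟩).1 with hxdef
      have htx : t x = (t p).swap :=
        ((E ⟨(t p).swap, h'⟩).symm ⟨p, (Prod.swap_swap (t p)).symm⟩).2
      have h1 : (t x).1 < (t x).2 := by
        rw [htx]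
        exact h'
      rw [hgp]
      show glue t E H x = p
      simp only [glue]
      rw [dif_pos h1]
      have hidx : (⟨t x, h1⟩ : {a : Fin q × Fin q // a.1 < a.2}) = ⟨(t p).swap, h'⟩ :=
        Subtype.ext htx
      calc ((E ⟨t x, h1⟩) ⟨x, rfl⟩).1
          = ((E ⟨(t p).swap, h'⟩)
              ((E ⟨(t p).swap, h'⟩).symm ⟨p, (Prod.swap_swap (t p)).symm⟩)).1 :=
            Eapp_cong t E hidx _ _ rfl
        _ = p := by rw [Equiv.apply_symm_apply]
    · have h2 : (t p).1 = (t p).2 := le_antisymm (not_lt.mp h') (not_lt.mp h)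
      have hd : t p = ((t p).1, (t p).1) := Prod.ext_iff.mpr ⟨rfl, h2.symm⟩
      have hgp : glue t E H p = ((H (t p).1).1 ⟨p, Prod.ext_iff.mpr
          ⟨rfl, (le_antisymm (not_lt.mp h') (not_lt.mp h)).symm⟩⟩).1 := by
        simp only [glue]; rw [dif_neg h, dif_neg h']
      set x : V := ((H (t p).1).1 ⟨p, Prod.ext_iff.mpr
          ⟨rfl, (le_antisymm (not_lt.mp h') (not_lt.mp h)).symm⟩⟩).1 with hxdef
      have htx : t x = ((t p).1, (t p).1) := ((H (t p).1).1 ⟨p, Prod.ext_iff.mpr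
          ⟨rfl, (le_antisymm (not_lt.mp h') (not_lt.mp h)).symm⟩⟩).2
      have hx1 : ¬ (t x).1 < (t x).2 := by
        rw [htx]
        exact lt_irrefl _
      have hx2 : ¬ (t x).2 < (t x).1 := by
        rw [htx]
        exact lt_irrefl _
      rw [hgp]
      show glue t E H x = p
      simp only [glue]
      rw [dif_neg hx1, dif_neg hx2]
      calc ((H (t x).1).1 ⟨x, Prod.ext_iff.mpr
            ⟨rfl, (le_antisymm (not_lt.mp hx2) (not_lt.mp hx1)).symm⟩⟩).1
          = ((H (t p).1).1 ((H (t p).1).1 ⟨p, Prod.ext_iff.mpr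
            ⟨rfl, (le_antisymm (not_lt.mp h') (not_lt.mp h)).symm⟩⟩)).1 :=
            Hcong t H (congrArg Prod.fst htx) _ _ rfl
        _ = p := by rw [(H (t p).1).2.1]

lemma glue_fpf (E : TypeE t) (H : TypeH t) (p : V) : glue t E H p ≠ p := by
  intro heq
  by_cases h : (t p).1 < (t p).2
  · have := glue_t t E H p
    rw [heq] at this
    have h1 : (t p).1 = (t p).2 := congrArg Prod.fst this
    exact absurd h1 (ne_of_lt h)
  · by_cases h' : (t p).2 < (t p).1
    · have := glue_t t E H p
      rw [heq] at this
      have h1 : (t p).2 = (t p).1 := congrArg Prod.snd this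
      exact absurd h1 (ne_of_lt h')
    · have hgp : glue t E H p = ((H (t p).1).1 ⟨p, Prod.ext_iff.mpr
          ⟨rfl, (le_antisymm (not_lt.mp h') (not_lt.mp h)).symm⟩⟩).1 := by
        simp only [glue]; rw [dif_neg h, dif_neg h']
      rw [hgp] at heq
      exact (H (t p).1).2.2 _ (Subtype.ext heq)

/-- The pairing decomposition equivalence. -/
noncomputable def pairEquiv :
    {f : Equiv.Perm V // (∀ p, f (f p) = p) ∧ (∀ p, f p ≠ p) ∧ ∀ p, t (f p) = (t p).swap}
      ≃ (TypeE t × TypeH t) where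
  toFun f :=
    (fun a => ⟨fun v => ⟨f.1 v.1, by rw [f.2.2.2, v.2]⟩,
               fun w => ⟨f.1 w.1, by rw [f.2.2.2, w.2, Prod.swap_swap]⟩,
               fun v => Subtype.ext (f.2.1 v.1),
               fun w => Subtype.ext (f.2.1 w.1)⟩,
     fun i => ⟨f.1.subtypePerm (by
        intro x
        constructor
        · intro hfx
          have h2 : (t x).swap = (i, i) := by rw [← f.2.2.2 x, hfx]
          rw [← Prod.swap_swap (t x), h2]
          rfl
        · intro hx
          rw [f.2.2.2, hx]
          rfl),
       ⟨fun x => Subtype.ext (f.2.1 x.1), fun x hx => f.2.2.1 x.1 (congrArg Subtype.val hx)⟩⟩)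
  invFun EH := ⟨Function.Involutive.toPerm (glue t EH.1 EH.2) (glue_invol t EH.1 EH.2),
    glue_invol t EH.1 EH.2, glue_fpf t EH.1 EH.2, glue_t t EH.1 EH.2⟩
  left_inv f := by
    apply Subtype.ext
    apply Equiv.ext
    intro p
    show glue t _ _ p = f.1 p
    by_cases h : (t p).1 < (t p).2
    · simp only [glue]
      rw [dif_pos h]
      rfl
    · by_cases h' : (t p).2 < (t p).1
      · simp only [glue]
        rw [dif_neg h, dif_pos h']
        rfl
      · simp only [glue]
        rw [dif_neg h, dif_neg h']
        rfl
  right_inv EH := by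
    obtain ⟨E, H⟩ := EH
    apply Prod.ext
    · funext a
      apply Equiv.ext
      intro v
      apply Subtype.ext
      show glue t E H v.1 = ((E a) v).1
      have h : (t v.1).1 < (t v.1).2 := by
        rw [v.2]
        exact a.2
      simp only [glue]
      rw [dif_pos h]
      exact Eapp_cong t E (Subtype.ext v.2) _ _ rfl
    · funext i
      apply Subtype.ext
      apply Equiv.ext
      intro x
      apply Subtype.ext
      show glue t E H x.1 = ((H i).1 x).1
      have hx1 : ¬ (t x.1).1 < (t x.1).2 := by
        rw [x.2]
        exact lt_irrefl _
      have hx2 : ¬ (t x.1).2 < (t x.1).1 := by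
        rw [x.2]
        exact lt_irrefl _
      simp only [glue]
      rw [dif_neg hx1, dif_neg hx2]
      exact Hcong t H (congrArg Prod.fst x.2) _ _ rfl

end Pairing

lemma natCardEquivType (α β : Type) [Finite α] [Finite β] (h : Nat.card α = Nat.card β) :
    Nat.card (α ≃ β) = (Nat.card α).factorial := by
  have := Fintype.ofFinite α
  have := Fintype.ofFinite β
  simp only [Nat.card_eq_fintype_card] at h ⊢
  rw [Fintype.card_equiv (Fintype.equivOfCardEq h)]

lemma natCardMatch (α : Type) [Finite α] (N : ℕ) (hc : Nat.card α = N) (he : Even N) :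
    Nat.card {g : Equiv.Perm α // (∀ x, g (g x) = x) ∧ ∀ x, g x ≠ x}
      = Nat.doubleFactorial (N - 1) := by
  have := Fintype.ofFinite α
  rw [Nat.card_eq_fintype_card, Fintype.card_subtype]
  rw [Nat.card_eq_fintype_card] at hc
  exact matchCard N α hc he

lemma pairCard {q : ℕ} {V : Type} [Fintype V] [DecidableEq V] (t : V → Fin q × Fin q)
    (m : Fin q × Fin q → ℕ)
    (hcnt : ∀ a, Nat.card {p : V // t p = a} = m a)
    (hsymm : ∀ a : Fin q × Fin q, m a.swap = m a)
    (hdiag : ∀ i : Fin q, Even (m (i, i))) :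
    Nat.card {f : Equiv.Perm V // (∀ p, f (f p) = p) ∧ (∀ p, f p ≠ p) ∧
        ∀ p, t (f p) = (t p).swap}
      = (∏ a ∈ Finset.univ.filter (fun a : Fin q × Fin q => a.1 < a.2), (m a).factorial) *
        ∏ i, Nat.doubleFactorial (m (i, i) - 1) := by
  rw [Nat.card_congr (pairEquiv t), Nat.card_prod, Nat.card_pi, Nat.card_pi]
  congr 1
  · rw [Finset.prod_subtype (Finset.univ.filter fun a : Fin q × Fin q => a.1 < a.2)
      (p := fun a => a.1 < a.2) (by intro x; simp) (fun a => (m a).factorial)]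
    apply Finset.prod_congr rfl
    intro a _
    rw [natCardEquivType _ _ (by rw [hcnt, hcnt, hsymm]), hcnt]
  · apply Finset.prod_congr rfl
    intro i _
    exact natCardMatch _ _ (hcnt _) (hdiag i)

/-- Enumeration of pairings in the configuration model: the number of fixed-point-free
involutions (perfect matchings) of `nd` labelled points, grouped by spin via `σ`, inducing
exactly `m(i,j)` matched points with spins `(i,j)`, equals
`∏ᵢ (ndρᵢ)!/∏ⱼ (m i j)! · ∏_{i<j} (m i j)! · ∏ᵢ (m i i - 1)!!`. -/
theorem stmt12 (q n d : ℕ) (hn : 0 < n) (hd : 0 < d) (hnd : Even (n * d))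
    (m : Fin q × Fin q → ℕ) (hsym : ∀ i j, m (i, j) = m (j, i))
    (hdiag : ∀ i, Even (m (i, i))) (hsum : ∑ a, m a = n * d)
    (σ : Fin (n * d) → Fin q)
    (hσ : ∀ i, (Finset.univ.filter fun p => σ p = i).card = ∑ j, m (i, j)) :
    (Finset.univ.filter (fun f : Equiv.Perm (Fin (n * d)) =>
        (∀ p, f (f p) = p) ∧ (∀ p, f p ≠ p) ∧
        ∀ i j, (Finset.univ.filter fun p => σ p = i ∧ σ (f p) = j).card = m (i, j))).card
      = (∏ i, Nat.multinomial Finset.univ (fun j => m (i, j))) *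
        (∏ a ∈ Finset.univ.filter (fun a : Fin q × Fin q => a.1 < a.2),
          Nat.factorial (m a)) *
        (∏ i, Nat.doubleFactorial (m (i, i) - 1)) := by
  set C : Finset (Fin (n * d) → Fin q) := Finset.univ.filter (fun c => ∀ i j,
      (Finset.univ.filter fun p => σ p = i ∧ c p = j).card = m (i, j)) with hC
  rw [Finset.card_eq_sum_card_fiberwise
    (f := fun f : Equiv.Perm (Fin (n * d)) => (fun p => σ (f p))) (t := C)
    (by intro f hf
        simp only [Finset.mem_coe, Finset.mem_filter, Finset.mem_univ, true_and] at hf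
        simp only [hC, Finset.mem_coe, Finset.mem_filter, Finset.mem_univ, true_and]
        exact hf.2.2)]
  have hconst : ∀ c ∈ C,
      ((Finset.univ.filter (fun f : Equiv.Perm (Fin (n * d)) =>
        (∀ p, f (f p) = p) ∧ (∀ p, f p ≠ p) ∧
        ∀ i j, (Finset.univ.filter fun p => σ p = i ∧ σ (f p) = j).card
          = m (i, j))).filter fun f => (fun p => σ (f p)) = c).card
      = (∏ a ∈ Finset.univ.filter (fun a : Fin q × Fin q => a.1 < a.2),
          Nat.factorial (m a)) *
        (∏ i, Nat.doubleFactorial (m (i, i) - 1)) := by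
    intro c hc
    simp only [hC, Finset.mem_filter, Finset.mem_univ, true_and] at hc
    have hset : ((Finset.univ.filter (fun f : Equiv.Perm (Fin (n * d)) =>
        (∀ p, f (f p) = p) ∧ (∀ p, f p ≠ p) ∧
        ∀ i j, (Finset.univ.filter fun p => σ p = i ∧ σ (f p) = j).card
          = m (i, j))).filter fun f => (fun p => σ (f p)) = c)
        = Finset.univ.filter (fun f : Equiv.Perm (Fin (n * d)) =>
          (∀ p, f (f p) = p) ∧ (∀ p, f p ≠ p) ∧
          ∀ p, (fun p => (σ p, c p)) (f p) = ((fun p => (σ p, c p)) p).swap) := by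
      ext f
      simp only [Finset.filter_filter, Finset.mem_filter, Finset.mem_univ, true_and]
      constructor
      · rintro ⟨⟨hinv, hfpf, _⟩, hfc⟩
        refine ⟨hinv, hfpf, fun p => ?_⟩
        have h1 : σ (f p) = c p := congrFun hfc p
        have h2 : c (f p) = σ p := by
          have := congrFun hfc (f p)
          rw [← this, hinv]
        exact Prod.ext_iff.mpr ⟨h1, h2⟩
      · rintro ⟨hinv, hfpf, ht⟩
        have hfc : ∀ p, σ (f p) = c p := fun p => congrArg Prod.fst (ht p)
        refine ⟨⟨hinv, hfpf, fun i j => ?_⟩, funext hfc⟩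
        rw [← hc i j]
        congr 1
        apply Finset.filter_congr
        intro p _
        rw [hfc p]
    rw [hset, cardFilterEq]
    exact pairCard (fun p => (σ p, c p)) m
      (fun a => by
        rw [← cardFilterEq]
        have : (Finset.univ.filter fun p : Fin (n * d) => (fun p => (σ p, c p)) p = a)
            = Finset.univ.filter fun p : Fin (n * d) => σ p = a.1 ∧ c p = a.2 := by
          apply Finset.filter_congr
          intro p _
          exact Prod.ext_iff
        rw [this]
        exact hc a.1 a.2)
      (fun a => hsym a.2 a.1)
      hdiag
  rw [Finset.sum_congr rfl hconst, Finset.sum_const, smul_eq_mul]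
  have hc2 : C.card = ∏ i, Nat.multinomial Finset.univ (fun j => m (i, j)) := by
    have hFcong : ∀ (F : ∀ i : Fin q, {ci : {p : Fin (n * d) // σ p = i} → Fin q //
          ∀ j, (Finset.univ.filter fun v => ci v = j).card = m (i, j)})
        {i' i : Fin q} (h : i' = i) (x : Fin (n * d)) (hx : σ x = i') (hx' : σ x = i),
        (F i').1 ⟨x, hx⟩ = (F i).1 ⟨x, hx'⟩ := by
      intro F i' i h x hx hx'
      subst h
      rfl
    rw [hC, cardFilterEq]
    have e1 : {c : Fin (n * d) → Fin q // ∀ i j,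
        (Finset.univ.filter fun p => σ p = i ∧ c p = j).card = m (i, j)}
        ≃ ∀ i : Fin q, {ci : {p : Fin (n * d) // σ p = i} → Fin q //
          ∀ j, (Finset.univ.filter fun v => ci v = j).card = m (i, j)} := by
      refine ⟨fun c i => ⟨fun v => c.1 v.1, fun j => ?_⟩,
        fun F => ⟨fun p => (F (σ p)).1 ⟨p, rfl⟩, fun i j => ?_⟩, fun c => ?_, fun F => ?_⟩
      · rw [cardFilterEq,
          cardSub2 (fun p : Fin (n * d) => σ p = i) (fun v => c.1 ↑v = j) (fun p => c.1 p = j)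
            (fun x hx => Iff.rfl), ← cardFilterEq]
        exact c.2 i j
      · rw [cardFilterEq, ← cardSub2 (fun p : Fin (n * d) => σ p = i)
          (fun v => (F (σ (v : Fin (n * d)))).1 ⟨(v : Fin (n * d)), rfl⟩ = j)
          (fun p => (F (σ p)).1 ⟨p, rfl⟩ = j) (fun x hx => Iff.rfl)]
        have e2 : {v : {p : Fin (n * d) // σ p = i} // (F (σ (v : Fin (n * d)))).1 ⟨(v : Fin (n * d)), rfl⟩ = j}
            ≃ {v : {p : Fin (n * d) // σ p = i} // (F i).1 v = j} := by
          apply Equiv.subtypeEquivRight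
          intro v
          rw [hFcong F v.2 (v : Fin (n * d)) rfl v.2]
        rw [Nat.card_congr e2, ← cardFilterEq]
        exact (F i).2 j
      · apply Subtype.ext
        funext p
        rfl
      · funext i
        apply Subtype.ext
        funext v
        show (F (σ (v : Fin (n * d)))).1 ⟨(v : Fin (n * d)), rfl⟩ = (F i).1 v
        rw [hFcong F v.2 (v : Fin (n * d)) rfl v.2]
    rw [Nat.card_congr e1, Nat.card_pi]
    apply Finset.prod_congr rfl
    intro i _
    have hcard : ∑ j ∈ Finset.univ, m (i, j) = Fintype.card {p : Fin (n * d) // σ p = i} := by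
      rw [Fintype.card_subtype, hσ i]
    have := countFiber (Finset.univ : Finset (Fin q)) {p : Fin (n * d) // σ p = i}
      (fun j => m (i, j)) hcard
    rw [cardFilterEq] at this
    rw [← this]
    apply Nat.card_congr
    apply Equiv.subtypeEquivRight
    intro ci
    constructor
    · intro h
      exact ⟨fun x => Finset.mem_univ _, fun j _ => h j⟩
    · intro h j
      exact h.2 j (Finset.mem_univ _)
  rw [hc2, mul_assoc]
end

section
/- For any fixed probability measures ρ on [q] and symmetric ν on [q]² with marginal ρ and ν ≪ ρ⊗ρ, there exists a sequence of admissible realizable types (ρ_n, ν_n) (with nρ_n and ndν_n integer-valued, ν_n symmetric with marginal ρ_n) such that ρ_n → ρ, ν_n → ν in total variation, and H(ρ_n||μ) + (d/2)H(ν_n||ρ_n⊗ρ_n) → H(ρ||μ) + (d/2)H(ν||ρ⊗ρ). -/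
open Filter

namespace S17
open Finset

lemma dvd_pad (d t : ℕ) (hd : 0 < d) : d ∣ t + (d - t % d) % d := by
  rcases Nat.eq_zero_or_pos (t % d) with h | h
  · have h2 : (d - t % d) % d = 0 := by simp [h, Nat.mod_self]
    rw [h2, Nat.add_zero]
    exact Nat.dvd_of_mod_eq_zero h
  · have h1 : t % d < d := Nat.mod_lt _ hd
    have h2 : (d - t % d) % d = d - t % d := Nat.mod_eq_of_lt (by omega)
    rw [h2]
    obtain ⟨c, hc⟩ : ∃ c, t = d * c + t % d := ⟨t / d, by
      have := Nat.div_add_mod t d; omega⟩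
    refine ⟨c + 1, ?_⟩
    have : d * (c + 1) = d * c + d := by ring
    omega

lemma even_double_sum {α : Type*} [DecidableEq α] (f : α → α → ℕ)
    (hsym : ∀ i j, f i j = f j i) (hdiag : ∀ i, Even (f i i)) (s : Finset α) :
    Even (∑ i ∈ s, ∑ j ∈ s, f i j) := by
  induction s using Finset.induction_on with
  | empty => simp
  | insert _ _ ha ih =>
    rename_i a s
    have e1 : ∀ i, ∑ j ∈ insert a s, f i j = f i a + ∑ j ∈ s, f i j :=
      fun i => Finset.sum_insert ha
    rw [Finset.sum_insert ha, e1, Finset.sum_congr rfl fun i _ => e1 i,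
      Finset.sum_add_distrib]
    have e2 : ∑ i ∈ s, f i a = ∑ j ∈ s, f a j := Finset.sum_congr rfl fun i _ => hsym i a
    rw [e2]
    obtain ⟨u, hu⟩ := hdiag a
    obtain ⟨v, hv⟩ := ih
    exact ⟨u + (∑ j ∈ s, f a j) + v, by omega⟩

lemma mul_log_div (x c : ℝ) (hc : c ≠ 0) :
    x * Real.log (x / c) = x * Real.log x - x * Real.log c := by
  rcases eq_or_ne x 0 with h | h
  · simp [h]
  · rw [Real.log_div h hc]; ring

lemma mul_log_div2 (x u v : ℝ) (hu : u ≠ 0) (hv : v ≠ 0) :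
    x * Real.log (x / (u * v)) = x * Real.log x - x * Real.log u - x * Real.log v := by
  rcases eq_or_ne x 0 with h | h
  · simp [h]
  · rw [Real.log_div h (mul_ne_zero hu hv), Real.log_mul hu hv]; ring

noncomputable def eps (n : ℕ) : ℝ := (Real.sqrt ((n : ℝ) + 1))⁻¹

lemma sqrt_tendsto : Tendsto (fun n : ℕ => Real.sqrt ((n : ℝ) + 1)) atTop atTop := by
  rw [tendsto_atTop]
  intro b
  have h : ∀ᶠ n : ℕ in atTop, b * b ≤ (n : ℝ) + 1 := by
    obtain ⟨N, hN⟩ := exists_nat_ge (b * b)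
    filter_upwards [eventually_ge_atTop N] with n hn
    have : (N : ℝ) ≤ n := by exact_mod_cast hn
    linarith
  filter_upwards [h] with n hn
  calc b ≤ |b| := le_abs_self b
    _ = Real.sqrt (b * b) := (Real.sqrt_mul_self_eq_abs b).symm
    _ ≤ _ := Real.sqrt_le_sqrt hn

lemma sqrt_pos' (n : ℕ) : 0 < Real.sqrt ((n : ℝ) + 1) :=
  Real.sqrt_pos.2 (by positivity)

lemma one_le_sqrt (n : ℕ) : 1 ≤ Real.sqrt ((n : ℝ) + 1) := by
  rw [show (1:ℝ) = Real.sqrt 1 by simp]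
  exact Real.sqrt_le_sqrt (by simp [Nat.cast_nonneg])

lemma eps_pos (n : ℕ) : 0 < eps n := inv_pos.2 (sqrt_pos' n)

lemma eps_le_one (n : ℕ) : eps n ≤ 1 := inv_le_one_of_one_le₀ (one_le_sqrt n)

lemma eps_tendsto : Tendsto eps atTop (nhds 0) := sqrt_tendsto.inv_tendsto_atTop

lemma mul_eps_tendsto : Tendsto (fun n : ℕ => (n : ℝ) * eps n) atTop atTop := by
  apply tendsto_atTop_mono _ (tendsto_atTop_add_const_right _ (-1) sqrt_tendsto)
  intro n
  have h := sqrt_pos' n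
  have hs : Real.sqrt ((n:ℝ)+1) * Real.sqrt ((n:ℝ)+1) = (n:ℝ)+1 :=
    Real.mul_self_sqrt (by positivity)
  have h1 : Real.sqrt ((n:ℝ)+1) + -1 ≤ (n:ℝ) / Real.sqrt ((n:ℝ)+1) := by
    rw [le_div_iff₀ h]
    nlinarith [one_le_sqrt n]
  simpa [eps, div_eq_mul_inv] using h1

end S17

open Finset in

set_option maxHeartbeats 1000000 in
/-- Denseness of types: any admissible pair `(ρ, ν)` with `ν ≪ ρ⊗ρ` is the limit of
realizable admissible types `(ρₙ, νₙ)` (with `n ρₙ` and `nd νₙ` integer valued), with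
convergence of the rate, along integers `n` with `nd` even. -/
theorem stmt17 {q : ℕ} (μ : Fin q → ℝ) (hμ0 : ∀ i, 0 < μ i) (hμ1 : ∑ i, μ i = 1)
    (d : ℕ) (hd : 1 ≤ d)
    (ρ : Fin q → ℝ) (ν : Fin q × Fin q → ℝ)
    (hρ0 : ∀ i, 0 ≤ ρ i) (hρ1 : ∑ i, ρ i = 1)
    (hν0 : ∀ a, 0 ≤ ν a) (hν1 : ∑ a, ν a = 1)
    (hsym : ∀ i j, ν (i, j) = ν (j, i)) (hmarg : ∀ i, ∑ j, ν (i, j) = ρ i)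
    (habs : ∀ i j, ρ i * ρ j = 0 → ν (i, j) = 0) :
    ∃ k : ℕ → Fin q → ℕ, ∃ m : ℕ → Fin q × Fin q → ℕ,
      (∀ n, Even (n * d) → 0 < n →
        (∑ i, k n i = n) ∧ (∀ i j, m n (i, j) = m n (j, i)) ∧ (∀ i, Even (m n (i, i))) ∧
        (∀ i, ∑ j, m n (i, j) = d * k n i)) ∧
      (∀ i, Tendsto (fun n => (k n i : ℝ) / n)
        (atTop ⊓ Filter.principal {n : ℕ | Even (n * d)}) (nhds (ρ i))) ∧
      (∀ a, Tendsto (fun n => (m n a : ℝ) / (n * d))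
        (atTop ⊓ Filter.principal {n : ℕ | Even (n * d)}) (nhds (ν a))) ∧
      Tendsto (fun n =>
          (∑ i, ((k n i : ℝ) / n) * Real.log (((k n i : ℝ) / n) / μ i)) +
            (d : ℝ) / 2 * ∑ i, ∑ j, ((m n (i, j) : ℝ) / (n * d)) *
              Real.log (((m n (i, j) : ℝ) / (n * d)) /
                (((k n i : ℝ) / n) * ((k n j : ℝ) / n))))
        (atTop ⊓ Filter.principal {n : ℕ | Even (n * d)})
        (nhds ((∑ i, ρ i * Real.log (ρ i / μ i)) +
          (d : ℝ) / 2 * ∑ i, ∑ j, ν (i, j) * Real.log (ν (i, j) / (ρ i * ρ j)))) := by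
  classical
  obtain ⟨i0, hρi0⟩ : ∃ i, 0 < ρ i := by
    by_contra hcon
    push_neg at hcon
    have h0 : ∑ i, ρ i = 0 := Finset.sum_eq_zero fun i _ => le_antisymm (hcon i) (hρ0 i)
    rw [hρ1] at h0
    norm_num at h0
  have hd0 : (0:ℝ) < d := by exact_mod_cast hd
  set ε : ℕ → ℝ := S17.eps with hεdef
  set P : ℕ → Fin q × Fin q → ℝ :=
    fun n a => (1 - ε n) * ν a + ε n * (ρ a.1 * ρ a.2) with hPdef
  set A : ℕ → Fin q × Fin q → ℝ := fun n a => (n : ℝ) * d * P n a with hAdef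
  have hε0 : ∀ n, 0 < ε n := S17.eps_pos
  have hε1 : ∀ n, ε n ≤ 1 := S17.eps_le_one
  have hP0 : ∀ n a, 0 ≤ P n a := fun n a =>
    add_nonneg (mul_nonneg (by linarith [hε1 n]) (hν0 a))
      (mul_nonneg (hε0 n).le (mul_nonneg (hρ0 _) (hρ0 _)))
  have hPsym : ∀ n i j, P n (i,j) = P n (j,i) := fun n i j => by
    simp only [hPdef]; rw [hsym]; ring
  have hPzero : ∀ n i j, ρ i * ρ j = 0 → P n (i,j) = 0 := fun n i j h => by
    simp only [hPdef]; rw [habs i j h, h]; ring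
  have hPsum : ∀ n, ∑ a, P n a = 1 := by
    intro n
    have h2 : ∑ a : Fin q × Fin q, ρ a.1 * ρ a.2 = 1 := by
      rw [Fintype.sum_prod_type, ← Finset.sum_mul_sum, hρ1]; norm_num
    simp only [hPdef]
    rw [Finset.sum_add_distrib, ← Finset.mul_sum, ← Finset.mul_sum, hν1, h2]
    ring
  have hPmarg : ∀ n i, ∑ j, P n (i, j) = ρ i := by
    intro n i
    simp only [hPdef]
    have e : ∀ j : Fin q, ε n * (ρ i * ρ j) = (ε n * ρ i) * ρ j := fun j => by ring
    rw [Finset.sum_add_distrib, ← Finset.mul_sum, hmarg i,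
      Finset.sum_congr rfl (fun j _ => e j), ← Finset.mul_sum, hρ1]
    ring
  have hPtends : ∀ a, Tendsto (fun n => P n a) atTop (nhds (ν a)) := by
    intro a
    have h1 : Tendsto ε atTop (nhds 0) := S17.eps_tendsto
    have h2 := (((tendsto_const_nhds (x := (1:ℝ))).sub h1).mul
        (tendsto_const_nhds (x := ν a))).add
      (h1.mul (tendsto_const_nhds (x := ρ a.1 * ρ a.2)))
    simpa using h2
  have hA0 : ∀ n a, 0 ≤ A n a := fun n a => by
    simp only [hAdef]
    exact mul_nonneg (mul_nonneg (Nat.cast_nonneg n) hd0.le) (hP0 n a)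
  have hAsym : ∀ n i j, A n (i,j) = A n (j,i) := fun n i j => by
    simp only [hAdef]; rw [hPsym]
  have hAzero : ∀ n i j, ρ i * ρ j = 0 → A n (i,j) = 0 := fun n i j h => by
    simp only [hAdef]; rw [hPzero n i j h, mul_zero]
  -- integer construction
  set mo : ℕ → Fin q → Fin q → ℕ :=
    fun n i j => if i = j then 2 * ⌊A n (i,i) / 2⌋₊ else ⌊A n (i,j)⌋₊ with hmodef
  set sS : ℕ → Fin q → ℕ := fun n i => ∑ j ∈ univ.erase i0, mo n i j with hsSdef
  set mc : ℕ → Fin q → ℕ :=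
    fun n i => ⌈A n (i,i0)⌉₊ + (d - (sS n i + ⌈A n (i,i0)⌉₊) % d) % d with hmcdef
  set Z : ℕ → ℤ := fun n => ((n * d : ℕ) : ℤ)
    - (∑ i ∈ univ.erase i0, ∑ j ∈ univ.erase i0, (mo n i j : ℤ))
    - 2 * ∑ i ∈ univ.erase i0, (mc n i : ℤ) with hZdef
  set mg : ℕ → Fin q × Fin q → ℕ := fun n a =>
    if a.1 = i0 then (if a.2 = i0 then (Z n).toNat else mc n a.2)
    else (if a.2 = i0 then mc n a.1 else mo n a.1 a.2) with hmgdef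
  have hmole : ∀ n i j, (mo n i j : ℝ) ≤ A n (i,j) := by
    intro n i j
    simp only [hmodef]
    split
    · rename_i h; subst h
      push_cast
      have h2 := Nat.floor_le (show (0:ℝ) ≤ A n (i,i) / 2 by
        have := hA0 n (i,i); linarith)
      linarith
    · exact Nat.floor_le (hA0 n (i,j))
  have hmoge : ∀ n i j, A n (i,j) - 2 ≤ (mo n i j : ℝ) := by
    intro n i j
    simp only [hmodef]
    split
    · rename_i h; subst h
      push_cast
      have h2 := Nat.lt_floor_add_one (A n (i,i) / 2)
      linarith
    · have h2 := Nat.lt_floor_add_one (A n (i,j))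
      linarith
  have hmcge : ∀ n i, A n (i,i0) ≤ (mc n i : ℝ) := by
    intro n i
    simp only [hmcdef]
    push_cast
    have h2 := Nat.le_ceil (A n (i,i0))
    have h3 : (0:ℝ) ≤ ((d - (sS n i + ⌈A n (i,i0)⌉₊) % d) % d : ℕ) := Nat.cast_nonneg _
    linarith
  have hmcle : ∀ n i, (mc n i : ℝ) ≤ A n (i,i0) + (d + 1) := by
    intro n i
    simp only [hmcdef]
    push_cast
    have h2 := Nat.ceil_lt_add_one (hA0 n (i,i0))
    have h3 : ((d - (sS n i + ⌈A n (i,i0)⌉₊) % d) % d : ℕ) < d := Nat.mod_lt _ (by omega)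
    have h4 : (((d - (sS n i + ⌈A n (i,i0)⌉₊) % d) % d : ℕ) : ℝ) ≤ d := by
      exact_mod_cast h3.le
    linarith
  -- zero rows
  have hmozero : ∀ n i j, ρ i * ρ j = 0 → mo n i j = 0 := by
    intro n i j h
    simp only [hmodef]
    split
    · rename_i hij
      subst hij
      rw [hAzero n i i h]
      simp
    · rw [hAzero n i j h]
      simp
  have hsSzero : ∀ n i, ρ i = 0 → sS n i = 0 := by
    intro n i h
    simp only [hsSdef]
    exact Finset.sum_eq_zero fun j _ => hmozero n i j (by rw [h, zero_mul])
  have hmczero : ∀ n i, ρ i = 0 → mc n i = 0 := by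
    intro n i h
    have h1 : A n (i,i0) = 0 := hAzero n i i0 (by rw [h, zero_mul])
    simp only [hmcdef]
    rw [hsSzero n i h, h1]
    simp [Nat.mod_self]
  have hii0 : ∀ l : Fin q, ρ l = 0 → l ≠ i0 := fun l hl he => by
    rw [he] at hl; exact hρi0.ne' hl
  have hmgzero : ∀ n i j, ρ i = 0 ∨ ρ j = 0 → mg n (i,j) = 0 := by
    intro n i j h
    simp only [hmgdef]
    rcases h with h | h
    · have h1 : i ≠ i0 := hii0 i h
      rw [if_neg h1]
      split
      · exact hmczero n i h
      · exact hmozero n i j (by rw [h, zero_mul])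
    · have h1 : j ≠ i0 := hii0 j h
      by_cases hi : i = i0
      · rw [if_pos hi, if_neg h1]; exact hmczero n j h
      · rw [if_neg hi, if_neg h1]; exact hmozero n i j (by rw [h, mul_zero])
  -- symmetry
  have hmosym : ∀ n i j, mo n i j = mo n j i := by
    intro n i j
    rcases eq_or_ne i j with rfl | h
    · rfl
    · simp only [hmodef]
      rw [if_neg h, if_neg h.symm, hAsym n i j]
  have hmgsym : ∀ n i j, mg n (i,j) = mg n (j,i) := by
    intro n i j
    simp only [hmgdef]
    by_cases hi : i = i0 <;> by_cases hj : j = i0 <;>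
      simp [hi, hj, hmosym n i j]
  -- row identities
  have hrow_ne : ∀ n (i : Fin q), i ≠ i0 → (∑ j, mg n (i,j)) = mc n i + sS n i := by
    intro n i hi
    rw [← Finset.add_sum_erase _ (fun j => mg n (i,j)) (mem_univ i0)]
    congr 1
    · simp [hmgdef, hi]
    · rw [hsSdef]
      refine Finset.sum_congr rfl fun j hj => ?_
      have hj0 : j ≠ i0 := (Finset.mem_erase.1 hj).1
      simp [hmgdef, hi, hj0]
  have hrow_i0 : ∀ n, (∑ j, mg n (i0,j)) = (Z n).toNat + ∑ j ∈ univ.erase i0, mc n j := by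
    intro n
    rw [← Finset.add_sum_erase _ (fun j => mg n (i0,j)) (mem_univ i0)]
    congr 1
    · simp [hmgdef]
    · refine Finset.sum_congr rfl fun j hj => ?_
      simp [hmgdef, (Finset.mem_erase.1 hj).1]
  have hrowdvd_ne : ∀ n (i : Fin q), i ≠ i0 → d ∣ ∑ j, mg n (i,j) := by
    intro n i hi
    rw [hrow_ne n i hi]
    have h1 := S17.dvd_pad d (sS n i + ⌈A n (i,i0)⌉₊) (by omega)
    have h2 : mc n i + sS n i
        = sS n i + ⌈A n (i,i0)⌉₊ + (d - (sS n i + ⌈A n (i,i0)⌉₊) % d) % d := by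
      simp only [hmcdef]; ring
    rw [h2]
    exact h1
  have htot : ∀ n, 0 ≤ Z n → ∑ i, ∑ j, mg n (i,j) = n * d := by
    intro n hn
    have e1 : ∑ i, ∑ j, mg n (i,j) = (Z n).toNat
        + 2 * (∑ i ∈ univ.erase i0, mc n i) + ∑ i ∈ univ.erase i0, sS n i := by
      rw [← Finset.add_sum_erase _ (fun i => ∑ j, mg n (i,j)) (mem_univ i0), hrow_i0 n,
        Finset.sum_congr rfl (fun i hi => hrow_ne n i (Finset.mem_erase.1 hi).1),
        Finset.sum_add_distrib (f := fun i => mc n i) (g := fun i => sS n i)]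
      omega
    have e2 : ((Z n).toNat : ℤ) = Z n := Int.toNat_of_nonneg hn
    have e3 : ∑ i ∈ univ.erase i0, ((sS n i : ℤ))
        = ∑ i ∈ univ.erase i0, ∑ j ∈ univ.erase i0, (mo n i j : ℤ) := by
      refine Finset.sum_congr rfl fun i _ => ?_
      simp only [hsSdef]
      push_cast
      rfl
    have : ((∑ i, ∑ j, mg n (i,j) : ℕ) : ℤ) = ((n * d : ℕ) : ℤ) := by
      rw [e1]
      push_cast
      rw [e2]
      simp only [hZdef]
      rw [← e3]
      push_cast
      ring
    exact_mod_cast this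
  have hrowdvd : ∀ n, 0 ≤ Z n → ∀ i, d ∣ ∑ j, mg n (i,j) := by
    intro n hn i
    rcases eq_or_ne i i0 with h | hi
    · rw [h]
      have hsum := htot n hn
      have hle : ∑ j, mg n (i0,j) + ∑ i ∈ univ.erase i0, ∑ j, mg n (i,j) = n * d := by
        rw [← hsum, Finset.add_sum_erase _ (fun i => ∑ j, mg n (i,j)) (mem_univ i0)]
      have he : ∑ j, mg n (i0,j) = n * d - ∑ i ∈ univ.erase i0, ∑ j, mg n (i,j) := by omega
      rw [he]
      exact Nat.dvd_sub ⟨n, (mul_comm n d)⟩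
        (Finset.dvd_sum fun i hi => hrowdvd_ne n i (Finset.mem_erase.1 hi).1)
    · exact hrowdvd_ne n i hi
  have hdiag_even : ∀ n, Even (n * d) → 0 ≤ Z n → Even (mg n (i0,i0)) := by
    intro n hnd hn
    have h1 : Even (∑ i ∈ univ.erase i0, ∑ j ∈ univ.erase i0, mo n i j) :=
      S17.even_double_sum _ (hmosym n)
        (fun i => ⟨⌊A n (i,i) / 2⌋₊, by simp only [hmodef, if_pos rfl]; ring⟩) _
    have h2 : Even (Z n) := by
      obtain ⟨a, ha⟩ := hnd
      obtain ⟨b, hb⟩ := h1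
      refine ⟨(a : ℤ) - b - ∑ i ∈ univ.erase i0, (mc n i : ℤ), ?_⟩
      simp only [hZdef]
      have hb' : ∑ i ∈ univ.erase i0, ∑ j ∈ univ.erase i0, (mo n i j : ℤ)
          = (b : ℤ) + b := by exact_mod_cast congrArg (Nat.cast (R := ℤ)) hb
      rw [hb', ha]
      push_cast
      ring
    have h3 : mg n (i0,i0) = (Z n).toNat := by simp [hmgdef]
    rw [h3]
    obtain ⟨c, hc⟩ := h2
    rw [← Int.even_coe_nat, Int.toNat_of_nonneg hn]
    exact ⟨c, hc⟩
  -- real-valued identity for Z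
  have hZcast : ∀ n, (Z n : ℝ) = A n (i0,i0)
      + 2 * (∑ i ∈ univ.erase i0, (A n (i,i0) - (mc n i : ℝ)))
      + ∑ i ∈ univ.erase i0, ∑ j ∈ univ.erase i0, (A n (i,j) - (mo n i j : ℝ)) := by
    intro n
    have h0 : ∑ a : Fin q × Fin q, A n a = (n:ℝ) * d := by
      simp only [hAdef]
      rw [← Finset.mul_sum, hPsum n, mul_one]
    have hAA : (n:ℝ) * d = A n (i0,i0) + 2 * ∑ i ∈ univ.erase i0, A n (i,i0)
        + ∑ i ∈ univ.erase i0, ∑ j ∈ univ.erase i0, A n (i,j) := by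
      rw [← h0, Fintype.sum_prod_type,
        ← Finset.add_sum_erase _ (fun i => ∑ j, A n (i,j)) (mem_univ i0),
        ← Finset.add_sum_erase _ (fun j => A n (i0,j)) (mem_univ i0)]
      have e1 : ∑ i ∈ univ.erase i0, ∑ j, A n (i,j)
          = ∑ i ∈ univ.erase i0, (A n (i,i0) + ∑ j ∈ univ.erase i0, A n (i,j)) :=
        Finset.sum_congr rfl fun i _ =>
          (Finset.add_sum_erase _ (fun j => A n (i,j)) (mem_univ i0)).symm
      have e2 : ∑ j ∈ univ.erase i0, A n (i0,j) = ∑ j ∈ univ.erase i0, A n (j,i0) :=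
        Finset.sum_congr rfl fun j _ => hAsym n i0 j
      rw [e1, Finset.sum_add_distrib
        (f := fun i => A n (i,i0)) (g := fun i => ∑ j ∈ univ.erase i0, A n (i,j)), e2]
      ring
    have e3 : ∑ i ∈ univ.erase i0, (A n (i,i0) - (mc n i : ℝ))
        = ∑ i ∈ univ.erase i0, A n (i,i0) - ∑ i ∈ univ.erase i0, (mc n i : ℝ) :=
      Finset.sum_sub_distrib _ _
    have e4 : ∑ i ∈ univ.erase i0, ∑ j ∈ univ.erase i0, (A n (i,j) - (mo n i j : ℝ))
        = ∑ i ∈ univ.erase i0, ∑ j ∈ univ.erase i0, A n (i,j)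
          - ∑ i ∈ univ.erase i0, ∑ j ∈ univ.erase i0, (mo n i j : ℝ) := by
      rw [← Finset.sum_sub_distrib]
      exact Finset.sum_congr rfl fun i _ => Finset.sum_sub_distrib _ _
    rw [e3, e4]
    simp only [hZdef]
    push_cast
    rw [hAA]
    ring
  have hcard : ((univ.erase i0).card : ℝ) ≤ q := by
    have h1 : (univ.erase i0).card ≤ (univ : Finset (Fin q)).card :=
      Finset.card_le_card (Finset.erase_subset _ _)
    have h2 : (univ : Finset (Fin q)).card = q := by simp
    exact_mod_cast h1.trans_eq h2
  have hq0 : (0:ℝ) ≤ q := Nat.cast_nonneg q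
  have hZlow : ∀ n, A n (i0,i0) - 2*q*(d+1) ≤ (Z n : ℝ) := by
    intro n
    rw [hZcast n]
    have h1 : -(((univ.erase i0).card : ℝ) * (d+1))
        ≤ ∑ i ∈ univ.erase i0, (A n (i,i0) - (mc n i : ℝ)) := by
      have := Finset.card_nsmul_le_sum (univ.erase i0)
        (fun i => A n (i,i0) - (mc n i : ℝ)) (-(d+1)) (fun i _ => by linarith [hmcle n i])
      rw [nsmul_eq_mul] at this
      linarith
    have h2 : (0:ℝ) ≤ ∑ i ∈ univ.erase i0, ∑ j ∈ univ.erase i0, (A n (i,j) - (mo n i j : ℝ)) :=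
      Finset.sum_nonneg fun i _ => Finset.sum_nonneg fun j _ => by linarith [hmole n i j]
    have h3 : ((univ.erase i0).card : ℝ) * (d+1) ≤ q * (d+1) := by
      have : (0:ℝ) ≤ (d:ℝ)+1 := by linarith
      exact mul_le_mul_of_nonneg_right hcard this
    linarith
  have hZhigh : ∀ n, (Z n : ℝ) ≤ A n (i0,i0) + 2*q*q := by
    intro n
    rw [hZcast n]
    have h1 : ∑ i ∈ univ.erase i0, (A n (i,i0) - (mc n i : ℝ)) ≤ 0 :=
      Finset.sum_nonpos fun i _ => by linarith [hmcge n i]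
    have h2 : ∑ i ∈ univ.erase i0, ∑ j ∈ univ.erase i0, (A n (i,j) - (mo n i j : ℝ))
        ≤ ((univ.erase i0).card : ℝ) * (((univ.erase i0).card : ℝ) * 2) := by
      have hin : ∀ i ∈ univ.erase i0, ∑ j ∈ univ.erase i0, (A n (i,j) - (mo n i j : ℝ))
          ≤ ((univ.erase i0).card : ℝ) * 2 := by
        intro i _
        have := Finset.sum_le_card_nsmul (univ.erase i0)
          (fun j => A n (i,j) - (mo n i j : ℝ)) 2 (fun j _ => by linarith [hmoge n i j])
        rw [nsmul_eq_mul] at this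
        linarith
      have := Finset.sum_le_card_nsmul (univ.erase i0)
        (fun i => ∑ j ∈ univ.erase i0, (A n (i,j) - (mo n i j : ℝ)))
        (((univ.erase i0).card : ℝ) * 2) hin
      rw [nsmul_eq_mul] at this
      linarith
    have h3 : ((univ.erase i0).card : ℝ) * (((univ.erase i0).card : ℝ) * 2) ≤ q * (q * 2) := by
      have h4 : (0:ℝ) ≤ ((univ.erase i0).card : ℝ) := Nat.cast_nonneg _
      nlinarith
    linarith
  have hAlb : ∀ n : ℕ, (n:ℝ) * ε n * (d * (ρ i0 * ρ i0)) ≤ A n (i0,i0) := by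
    intro n
    simp only [hAdef, hPdef]
    have h1 : (0:ℝ) ≤ (1 - ε n) * ν (i0,i0) :=
      mul_nonneg (by linarith [hε1 n]) (hν0 (i0,i0))
    have h2 : (0:ℝ) ≤ (n:ℝ) * d := mul_nonneg (Nat.cast_nonneg n) hd0.le
    nlinarith
  have hNev : ∀ᶠ n in atTop, 0 ≤ Z n := by
    have hpos : (0:ℝ) < d * (ρ i0 * ρ i0) := by positivity
    have hT : Tendsto (fun n : ℕ => (n : ℝ) * ε n * (d * (ρ i0 * ρ i0)) - 2*q*(d+1))
        atTop atTop := by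
      apply tendsto_atTop_add_const_right
      exact S17.mul_eps_tendsto.atTop_mul_const hpos
    filter_upwards [hT.eventually_ge_atTop 0] with n hn
    have h1 := hZlow n
    have h2 := hAlb n
    have : (0:ℝ) ≤ (Z n : ℝ) := by linarith
    exact_mod_cast this
  obtain ⟨N, hNN⟩ := eventually_atTop.1 hNev
  -- final definitions
  set mt : ℕ → Fin q × Fin q → ℕ := fun n a => if a = (i0,i0) then n * d else 0 with hmtdef
  set m : ℕ → Fin q × Fin q → ℕ := fun n a => if N ≤ n then mg n a else mt n a with hmdef
  set k : ℕ → Fin q → ℕ := fun n i => (∑ j, m n (i,j)) / d with hkdef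
  -- convergence machinery
  have hndT : Tendsto (fun n : ℕ => (n:ℝ) * d) atTop atTop :=
    tendsto_natCast_atTop_atTop.atTop_mul_const hd0
  have key : ∀ (f : ℕ → ℕ) (a : Fin q × Fin q) (C : ℝ),
      (∀ᶠ n in atTop, |(f n : ℝ) - A n a| ≤ C) →
      Tendsto (fun n => (f n : ℝ) / ((n:ℝ) * d)) atTop (nhds (ν a)) := by
    intro f a C hC
    have h1 : Tendsto (fun n => A n a / ((n:ℝ) * d)) atTop (nhds (ν a)) := by
      refine (hPtends a).congr' ?_
      filter_upwards [eventually_ge_atTop 1] with n hn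
      have hn1 : (1:ℝ) ≤ n := by exact_mod_cast hn
      have hn0 : ((n:ℝ) * d) ≠ 0 := by positivity
      simp only [hAdef]
      rw [mul_div_cancel_left₀ _ hn0]
    have h3 : Tendsto (fun n : ℕ => C * ((n:ℝ) * d)⁻¹) atTop (nhds 0) := by
      have h4 := hndT.inv_tendsto_atTop
      simpa using h4.const_mul C
    have h2 : Tendsto (fun n => ((f n : ℝ) - A n a) / ((n:ℝ) * d)) atTop (nhds 0) := by
      apply squeeze_zero_norm' _ h3
      filter_upwards [hC, eventually_ge_atTop 1] with n h1n h2n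
      have hn1 : (1:ℝ) ≤ n := by exact_mod_cast h2n
      have hpos : (0:ℝ) < (n:ℝ) * d := by positivity
      rw [Real.norm_eq_abs, abs_div, abs_of_pos hpos, div_eq_mul_inv]
      exact mul_le_mul_of_nonneg_right h1n (by positivity)
    have h4 := h1.add h2
    rw [add_zero] at h4
    refine h4.congr fun n => ?_
    rw [← add_div]
    congr 1
    ring
  set Cb : ℝ := 2*q*((d:ℝ)+1) + 2*q*q + ((d:ℝ)+1) + 2 with hCbdef
  have hmgbound : ∀ a : Fin q × Fin q, ∀ᶠ n in atTop, |(mg n a : ℝ) - A n a| ≤ Cb := by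
    intro a
    filter_upwards [hNev] with n hz
    obtain ⟨i, j⟩ := a
    have c1 : (0:ℝ) ≤ 2*q*((d:ℝ)+1) := by positivity
    have c2 : (0:ℝ) ≤ 2*(q:ℝ)*q := by positivity
    have c3 : (0:ℝ) ≤ (d:ℝ)+1 := by positivity
    rcases eq_or_ne i i0 with hi | hi <;> rcases eq_or_ne j i0 with hj | hj
    · rw [hi, hj]
      have e1 : mg n (i0,i0) = (Z n).toNat := by simp [hmgdef]
      have e : ((mg n (i0,i0) : ℕ) : ℝ) = (Z n : ℝ) := by
        rw [e1]
        exact_mod_cast congrArg (fun z : ℤ => (z : ℝ)) (Int.toNat_of_nonneg hz)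
      rw [e, abs_le]
      constructor
      · have := hZlow n; simp only [hCbdef]; linarith
      · have := hZhigh n; simp only [hCbdef]; linarith
    · rw [hi]
      have e1 : mg n (i0,j) = mc n j := by simp [hmgdef, hj]
      rw [e1, hAsym n i0 j, abs_le]
      constructor
      · have := hmcge n j; simp only [hCbdef]; linarith
      · have := hmcle n j; simp only [hCbdef]; linarith
    · rw [hj]
      have e1 : mg n (i,i0) = mc n i := by simp [hmgdef, hi]
      rw [e1, abs_le]
      constructor
      · have := hmcge n i; simp only [hCbdef]; linarith
      · have := hmcle n i; simp only [hCbdef]; linarith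
    · have e1 : mg n (i,j) = mo n i j := by simp [hmgdef, hi, hj]
      rw [e1, abs_le]
      constructor
      · have := hmoge n i j; simp only [hCbdef]; linarith
      · have := hmole n i j; simp only [hCbdef]; linarith
  have hm_t : ∀ a, Tendsto (fun n => (m n a : ℝ) / ((n:ℝ) * d)) atTop (nhds (ν a)) := by
    intro a
    refine key (fun n => m n a) a Cb ?_
    filter_upwards [hmgbound a, eventually_ge_atTop N] with n h1 h2
    have e : m n a = mg n a := by simp [hmdef, h2]
    rw [e]
    exact h1
  have hk_t : ∀ i, Tendsto (fun n => (k n i : ℝ) / n) atTop (nhds (ρ i)) := by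
    intro i
    have hS : Tendsto (fun n => ∑ j, (m n (i,j) : ℝ) / ((n:ℝ) * d)) atTop (nhds (ρ i)) := by
      have h1 := tendsto_finset_sum (univ : Finset (Fin q)) (fun j _ => hm_t (i,j))
      rw [show ∑ j, ν (i,j) = ρ i from hmarg i] at h1
      exact h1
    refine Tendsto.congr' ?_ hS
    filter_upwards [eventually_ge_atTop (max N 1)] with n hn
    have hNn : N ≤ n := le_trans (le_max_left _ _) hn
    have h1n : 1 ≤ n := le_trans (le_max_right _ _) hn
    have hz := hNN n hNn
    have hrowm : ∑ j, m n (i,j) = ∑ j, mg n (i,j) :=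
      Finset.sum_congr rfl fun j _ => by simp [hmdef, hNn]
    have hdvd : d ∣ ∑ j, m n (i,j) := hrowm ▸ hrowdvd n hz i
    have hmul : d * k n i = ∑ j, m n (i,j) := by
      simp only [hkdef]; exact Nat.mul_div_cancel' hdvd
    have hc : (d:ℝ) * (k n i : ℝ) = ∑ j, (m n (i,j) : ℝ) := by exact_mod_cast hmul
    rw [← Finset.sum_div, ← hc]
    rw [mul_comm (n:ℝ) (d:ℝ), mul_div_mul_left _ _ (ne_of_gt hd0)]
  have hterm1 : ∀ i, Tendsto (fun n => ((k n i : ℝ)/n) * Real.log (((k n i : ℝ)/n) / μ i))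
      atTop (nhds (ρ i * Real.log (ρ i / μ i))) := by
    intro i
    have hμ : μ i ≠ 0 := (hμ0 i).ne'
    have hcont : Tendsto (fun x : ℝ => x * Real.log x - x * Real.log (μ i)) (nhds (ρ i))
        (nhds (ρ i * Real.log (ρ i) - ρ i * Real.log (μ i))) :=
      ((Real.continuous_mul_log.sub (continuous_id.mul continuous_const)).tendsto _)
    have L := hcont.comp (hk_t i)
    rw [← S17.mul_log_div _ _ hμ] at L
    refine L.congr fun n => ?_
    simp only [Function.comp_apply]
    exact (S17.mul_log_div _ _ hμ).symm
  have hterm2 : ∀ i j, Tendsto (fun n => ((m n (i,j) : ℝ) / ((n:ℝ) * d)) *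
      Real.log (((m n (i,j) : ℝ) / ((n:ℝ) * d)) / (((k n i : ℝ) / n) * ((k n j : ℝ) / n))))
      atTop (nhds (ν (i,j) * Real.log (ν (i,j) / (ρ i * ρ j)))) := by
    intro i j
    rcases eq_or_ne (ρ i * ρ j) 0 with h0 | h0
    · have hν00 : ν (i,j) = 0 := habs i j h0
      rw [hν00, zero_mul]
      refine Tendsto.congr' ?_ (tendsto_const_nhds (x := (0:ℝ)))
      filter_upwards [eventually_ge_atTop N] with n hn
      have h1 : m n (i,j) = mg n (i,j) := by simp [hmdef, hn]
      have h2 : mg n (i,j) = 0 := hmgzero n i j (mul_eq_zero.1 h0)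
      rw [h1, h2]
      simp
    · have hρi : ρ i ≠ 0 := fun h => h0 (by rw [h, zero_mul])
      have hρj : ρ j ≠ 0 := fun h => h0 (by rw [h, mul_zero])
      have hy := hm_t (i,j)
      have hxi := hk_t i
      have hxj := hk_t j
      have l1 : Tendsto (fun n => ((m n (i,j) : ℝ)/((n:ℝ)*d))
          * Real.log ((m n (i,j) : ℝ)/((n:ℝ)*d)))
          atTop (nhds (ν (i,j) * Real.log (ν (i,j)))) :=
        (Real.continuous_mul_log.tendsto (ν (i,j))).comp hy
      have l2 : Tendsto (fun n => ((m n (i,j) : ℝ)/((n:ℝ)*d)) * Real.log ((k n i : ℝ)/n))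
          atTop (nhds (ν (i,j) * Real.log (ρ i))) :=
        hy.mul (((Real.continuousAt_log hρi).tendsto).comp hxi)
      have l3 : Tendsto (fun n => ((m n (i,j) : ℝ)/((n:ℝ)*d)) * Real.log ((k n j : ℝ)/n))
          atTop (nhds (ν (i,j) * Real.log (ρ j))) :=
        hy.mul (((Real.continuousAt_log hρj).tendsto).comp hxj)
      have L := (l1.sub l2).sub l3
      rw [← S17.mul_log_div2 _ _ _ hρi hρj] at L
      refine Tendsto.congr' ?_ L
      filter_upwards [hxi.eventually_ne hρi, hxj.eventually_ne hρj] with n h1 h2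
      exact (S17.mul_log_div2 _ _ _ h1 h2).symm
  refine ⟨k, m, ?_, ?_, ?_, ?_⟩
  · -- constraints
    intro n hnd hnpos
    by_cases hN : N ≤ n
    · have hz : 0 ≤ Z n := hNN n hN
      have hmeq : ∀ a, m n a = mg n a := fun a => by simp [hmdef, hN]
      have hrowm : ∀ i : Fin q, ∑ j, m n (i,j) = ∑ j, mg n (i,j) :=
        fun i => Finset.sum_congr rfl fun j _ => hmeq (i,j)
      have hdvd : ∀ i : Fin q, d ∣ ∑ j, m n (i,j) := fun i => (hrowm i) ▸ hrowdvd n hz i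
      have hkeq : ∀ i : Fin q, d * k n i = ∑ j, m n (i,j) := fun i => by
        simp only [hkdef]
        exact Nat.mul_div_cancel' (hdvd i)
      refine ⟨?_, ?_, ?_, fun i => (hkeq i).symm⟩
      · have h1 : d * ∑ i, k n i = n * d := by
          rw [Finset.mul_sum, Finset.sum_congr rfl fun i _ => hkeq i,
            Finset.sum_congr rfl fun i _ => hrowm i]
          exact htot n hz
        have h2 : d * ∑ i, k n i = d * n := by rw [h1]; exact Nat.mul_comm n d
        exact Nat.eq_of_mul_eq_mul_left (by omega) h2
      · intro i j
        rw [hmeq (i,j), hmeq (j,i)]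
        exact hmgsym n i j
      · intro i
        rw [hmeq (i,i)]
        rcases eq_or_ne i i0 with h | h
        · rw [h]
          exact hdiag_even n hnd hz
        · have e : mg n (i,i) = 2 * ⌊A n (i,i) / 2⌋₊ := by
            simp only [hmgdef]
            rw [if_neg h, if_neg h]
            simp only [hmodef]
            simp
          exact ⟨⌊A n (i,i) / 2⌋₊, by rw [e]; ring⟩
    · push_neg at hN
      have hmeq : ∀ a, m n a = mt n a := fun a => by simp [hmdef, Nat.not_le.2 hN]
      have hrow : ∀ i : Fin q, ∑ j, m n (i,j) = if i = i0 then n * d else 0 := by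
        intro i
        rw [Finset.sum_congr rfl fun j _ => hmeq (i,j)]
        have e : ∀ j, mt n (i,j) = if j = i0 ∧ i = i0 then n*d else 0 := fun j => by
          simp only [hmtdef, Prod.mk.injEq]
          by_cases h1 : i = i0 <;> by_cases h2 : j = i0 <;> simp [h1, h2]
        rw [Finset.sum_congr rfl fun j _ => e j]
        rcases eq_or_ne i i0 with h | h
        · simp [h, Finset.sum_ite_eq']
        · simp [h]
      have hkval : ∀ i : Fin q, k n i = if i = i0 then n else 0 := by
        intro i
        simp only [hkdef]
        rw [hrow i]
        rcases eq_or_ne i i0 with h | h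
        · rw [if_pos h, if_pos h]
          exact Nat.mul_div_cancel n (by omega)
        · rw [if_neg h, if_neg h]
          exact Nat.zero_div d
      refine ⟨?_, ?_, ?_, ?_⟩
      · rw [Finset.sum_congr rfl fun i _ => hkval i]
        simp [Finset.sum_ite_eq']
      · intro i j
        rw [hmeq (i,j), hmeq (j,i)]
        simp only [hmtdef, Prod.mk.injEq]
        by_cases h1 : i = i0 <;> by_cases h2 : j = i0 <;> simp [h1, h2]
      · intro i
        rw [hmeq (i,i)]
        simp only [hmtdef]
        rcases eq_or_ne i i0 with h | h
        · rw [h, if_pos rfl]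
          exact hnd
        · rw [if_neg (by simp [Prod.ext_iff, h])]
          exact Even.zero
      · intro i
        rw [hrow i, hkval i]
        rcases eq_or_ne i i0 with h | h
        · rw [if_pos h, if_pos h, mul_comm]
        · rw [if_neg h, if_neg h, mul_zero]
  · intro i
    exact (hk_t i).mono_left inf_le_left
  · intro a
    exact (hm_t a).mono_left inf_le_left
  · apply Tendsto.mono_left _ inf_le_left
    exact (tendsto_finset_sum univ fun i _ => hterm1 i).add
      (Tendsto.const_mul _ (tendsto_finset_sum univ fun i _ =>
        tendsto_finset_sum univ fun j _ => hterm2 i j))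
end
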